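/- ζ(3) = (4/7)(π² ln(2)/2 + 4 ∫₀^{π/2} x ln(sin x) dx). -/

import Mathlib

open Real MeasureTheory Set Filter Topology


/-! ### Series bookkeeping -/

private lemma hasSumT : HasSum (fun n : ℕ => 1 / (n : ℝ) ^ 3) (∑' n : ℕ, 1 / ((n : ℝ) + 1) ^ 3) := by
  have h : Summable (fun n : ℕ => 1 / (n : ℝ) ^ 3) :=
    Real.summable_one_div_nat_pow.2 (by norm_num)
  have h2 := (hasSum_nat_add_iff' (f := fun n : ℕ => 1 / (n : ℝ) ^ 3) 1).2 h.hasSum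
  simp only [Finset.range_one, Finset.sum_singleton, Nat.cast_zero, ne_eq,
    OfNat.ofNat_ne_zero, not_false_eq_true, zero_pow, div_zero, sub_zero] at h2
  push_cast at h2
  rw [h2.tsum_eq]
  exact h.hasSum

private lemma hasSumOdd : HasSum (fun k : ℕ => 1 / ((2 * k + 1 : ℕ) : ℝ) ^ 3)
    ((7 / 8) * ∑' n : ℕ, 1 / ((n : ℝ) + 1) ^ 3) := by
  set T := ∑' n : ℕ, 1 / ((n : ℝ) + 1) ^ 3 with hT
  have hg := hasSumT
  have hE : HasSum (fun k : ℕ => 1 / ((2 * k : ℕ) : ℝ) ^ 3) ((1 / 8) * T) := by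
    refine (hg.mul_left (1 / 8)).congr_fun fun k => ?_
    push_cast
    rw [div_mul_div_comm, mul_pow]
    norm_num
  have hO : Summable (fun k : ℕ => 1 / ((2 * k + 1 : ℕ) : ℝ) ^ 3) := by
    have hinj : Function.Injective (fun k : ℕ => 2 * k + 1) := by
      intro a b hab; simpa using hab
    exact hasSumT.summable.comp_injective hinj
  have hcomb := HasSum.even_add_odd (f := fun n : ℕ => 1 / (n : ℝ) ^ 3) hE hO.hasSum
  have huniq : (1 / 8) * T + ∑' k : ℕ, 1 / ((2 * k + 1 : ℕ) : ℝ) ^ 3 = T :=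
    hcomb.unique hg
  have h8 : ∑' k : ℕ, 1 / ((2 * k + 1 : ℕ) : ℝ) ^ 3 = (7 / 8) * T := by linarith
  rw [← h8]; exact hO.hasSum

private noncomputable def cc (n : ℕ) : ℝ := ((-1 : ℝ) ^ (n + 1) - 1) / (4 * ((n : ℝ) + 1) ^ 3)

private lemma hasSumC : HasSum cc (-(7 / 16) * ∑' n : ℕ, 1 / ((n : ℝ) + 1) ^ 3) := by
  have hO := hasSumOdd
  have hE : HasSum (fun k : ℕ => cc (2 * k))
      (-(1 / 2) * ((7 / 8) * ∑' n : ℕ, 1 / ((n : ℝ) + 1) ^ 3)) := by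
    refine (hO.mul_left (-(1 / 2))).congr_fun fun k => ?_
    unfold cc
    have h1 : ((-1 : ℝ)) ^ (2 * k + 1) = -1 := by
      rw [pow_succ, pow_mul]; norm_num
    rw [h1]
    have hk : (2 * (k : ℝ) + 1) ≠ 0 := by positivity
    push_cast
    field_simp
    ring
  have hOdd : HasSum (fun k : ℕ => cc (2 * k + 1)) 0 := by
    convert hasSum_zero with k
    unfold cc
    have h1 : ((-1 : ℝ)) ^ (2 * k + 1 + 1) = 1 := by
      rw [pow_succ, pow_succ, pow_mul]; norm_num
    rw [h1]
    simp
  have hcomb := HasSum.even_add_odd (f := cc) hE hOdd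
  rw [add_zero] at hcomb
  convert hcomb using 1
  ring

/-! ### The pointwise Fourier-type expansion -/

private lemma logSum (r x : ℝ) (h0 : 0 ≤ r) (h1 : r < 1) :
    HasSum (fun n : ℕ => r ^ (n + 1) * Real.cos (2 * ((n : ℝ) + 1) * x) / ((n : ℝ) + 1))
      (-(1 / 2) * Real.log (1 - 2 * r * Real.cos (2 * x) + r ^ 2)) := by
  set z : ℂ := (r : ℂ) * Complex.exp ((2 * x : ℝ) * Complex.I) with hz
  have hnorm : ‖z‖ < 1 := by
    rw [hz, norm_mul, Complex.norm_exp_ofReal_mul_I]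
    simpa [Complex.norm_real, abs_of_nonneg h0] using h1
  have h := Complex.hasSum_taylorSeries_neg_log hnorm
  have hre := Complex.hasSum_re h
  have hterm : ∀ n : ℕ, (z ^ n / (n : ℂ)).re = r ^ n * Real.cos (2 * (n : ℝ) * x) / (n : ℝ) := by
    intro n
    have hzn : z ^ n = ((r ^ n : ℝ) : ℂ) * Complex.exp ((2 * (n : ℝ) * x : ℝ) * Complex.I) := by
      rw [hz, mul_pow, ← Complex.exp_nat_mul]
      push_cast
      ring_nf
    rw [hzn]
    have : ((n : ℂ)) = ((n : ℝ) : ℂ) := by push_cast; ring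
    rw [this, Complex.div_ofReal_re]
    congr 1
    rw [Complex.re_ofReal_mul, Complex.exp_ofReal_mul_I_re]
  have hval : (-Complex.log (1 - z)).re =
      -(1 / 2) * Real.log (1 - 2 * r * Real.cos (2 * x) + r ^ 2) := by
    rw [Complex.neg_re, Complex.log_re]
    have habs : ‖1 - z‖ ^ 2 = 1 - 2 * r * Real.cos (2 * x) + r ^ 2 := by
      rw [Complex.sq_norm, Complex.normSq_apply]
      have hre1 : (1 - z).re = 1 - r * Real.cos (2 * x) := by
        rw [Complex.sub_re, Complex.one_re, hz, Complex.re_ofReal_mul,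
          Complex.exp_ofReal_mul_I_re]
      have him1 : (1 - z).im = -(r * Real.sin (2 * x)) := by
        rw [Complex.sub_im, Complex.one_im, hz, Complex.im_ofReal_mul,
          Complex.exp_ofReal_mul_I_im]
        ring
      rw [hre1, him1]
      have hsc := Real.sin_sq_add_cos_sq (2 * x)
      nlinarith [hsc]
    have hpos : (0 : ℝ) < ‖1 - z‖ := by
      have : (1 : ℂ) - z ≠ 0 := by
        intro hcontra
        have : ‖(1 : ℂ)‖ = ‖z‖ := by rw [sub_eq_zero] at hcontra; rw [hcontra]
        simp at this
        rw [this] at hnorm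
        exact lt_irrefl _ hnorm
      simpa using norm_pos_iff.mpr this
    have hlp : Real.log ((‖1 - z‖) ^ (2 : ℕ)) =
        2 * Real.log (‖1 - z‖) := by
      rw [Real.log_pow]; norm_num
    rw [habs] at hlp
    rw [hlp]
    ring
  rw [hval] at hre
  have hre' : HasSum (fun n : ℕ => r ^ n * Real.cos (2 * (n : ℝ) * x) / (n : ℝ))
      (-(1 / 2) * Real.log (1 - 2 * r * Real.cos (2 * x) + r ^ 2)) := by
    refine hre.congr_fun fun n => (hterm n).symm ▸ rfl
  have hsh := (hasSum_nat_add_iff'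
    (f := fun n : ℕ => r ^ n * Real.cos (2 * (n : ℝ) * x) / (n : ℝ)) 1).2 hre'
  simp only [Finset.range_one, Finset.sum_singleton] at hsh
  norm_num at hsh
  have : -(1 / 2 * Real.log (1 - 2 * r * Real.cos (2 * x) + r ^ 2)) =
      -(1 / 2) * Real.log (1 - 2 * r * Real.cos (2 * x) + r ^ 2) := by ring
  rw [this] at hsh
  refine hsh.congr_fun fun n => ?_
  push_cast
  ring_nf

/-! ### The elementary integral -/

private lemma xcos_integral (n : ℕ) :
    ∫ x in (0:ℝ)..(π / 2), x * Real.cos (2 * ((n : ℝ) + 1) * x)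
      = ((-1 : ℝ) ^ (n + 1) - 1) / (4 * ((n : ℝ) + 1) ^ 2) := by
  set m : ℝ := (n : ℝ) + 1 with hm
  have hm0 : m ≠ 0 := by positivity
  set a : ℝ := 2 * m with ha
  have ha0 : a ≠ 0 := by positivity
  set F : ℝ → ℝ := fun x => x * Real.sin (a * x) / a + Real.cos (a * x) / a ^ 2 with hF
  have hderiv : ∀ x ∈ Set.uIcc (0:ℝ) (π / 2), HasDerivAt F (x * Real.cos (a * x)) x := by
    intro x _
    have hax : HasDerivAt (fun y : ℝ => a * y) a x := by
      simpa using (hasDerivAt_id x).const_mul a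
    have hsin : HasDerivAt (fun y : ℝ => Real.sin (a * y)) (Real.cos (a * x) * a) x :=
      (Real.hasDerivAt_sin (a * x)).comp x hax
    have hcos : HasDerivAt (fun y : ℝ => Real.cos (a * y)) (-Real.sin (a * x) * a) x :=
      (Real.hasDerivAt_cos (a * x)).comp x hax
    have h1 : HasDerivAt (fun y : ℝ => y * Real.sin (a * y) / a)
        ((1 * Real.sin (a * x) + x * (Real.cos (a * x) * a)) / a) x :=
      ((hasDerivAt_id x).mul hsin).div_const a
    have h2 : HasDerivAt (fun y : ℝ => Real.cos (a * y) / a ^ 2)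
        ((-Real.sin (a * x) * a) / a ^ 2) x := hcos.div_const (a ^ 2)
    have := h1.add h2
    refine this.congr_deriv ?_
    rw [div_add_div _ _ ha0 (pow_ne_zero 2 ha0), div_eq_iff (mul_ne_zero ha0 (pow_ne_zero 2 ha0))]
    ring
  have hcont : IntervalIntegrable (fun x : ℝ => x * Real.cos (a * x)) MeasureTheory.volume 0 (π / 2) :=
    (continuous_id.mul (Real.continuous_cos.comp (continuous_const.mul continuous_id))).intervalIntegrable _ _
  have := intervalIntegral.integral_eq_sub_of_hasDerivAt hderiv hcont
  rw [ha] at this ⊢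
  rw [this]
  have hsin0 : Real.sin (2 * m * (π / 2)) = 0 := by
    have : 2 * m * (π / 2) = ((n + 1 : ℕ) : ℝ) * π := by push_cast [hm]; ring
    rw [this, Real.sin_nat_mul_pi]
  have hcos0 : Real.cos (2 * m * (π / 2)) = (-1 : ℝ) ^ (n + 1) := by
    have h1 : 2 * m * (π / 2) = ((n + 1 : ℕ) : ℝ) * π - 0 := by push_cast [hm]; ring
    rw [h1, Real.cos_nat_mul_pi_sub]
    simp
  simp only [hF]
  rw [hsin0, hcos0]
  simp only [mul_zero, zero_mul, Real.cos_zero, Real.sin_zero, zero_div, zero_add, mul_zero]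
  have hm2 : (2 * m) ^ 2 = 4 * m ^ 2 := by ring
  rw [hm2]
  field_simp

/-! ### Integrability of `log` near `0` and bounds -/

private lemma logIntegrable : IntegrableOn Real.log (Set.Ioc (0:ℝ) (π / 2)) := by
  have hg : IntegrableOn (fun x : ℝ => 2 * x ^ (-(1/2) : ℝ) + π / 2) (Set.Ioc (0:ℝ) (π / 2)) := by
    have h1 : IntervalIntegrable (fun x : ℝ => x ^ (-(1/2) : ℝ)) volume 0 (π / 2) :=
      intervalIntegral.intervalIntegrable_rpow' (by norm_num)
    have h2 : IntegrableOn (fun x : ℝ => x ^ (-(1/2) : ℝ)) (Set.Ioc (0:ℝ) (π / 2)) := by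
      rw [← intervalIntegrable_iff_integrableOn_Ioc_of_le (by positivity : (0:ℝ) ≤ π / 2)]
      exact h1
    exact (h2.const_mul 2).add (integrableOn_const measure_Ioc_lt_top.ne)
  refine hg.integrable.mono ?_ ?_
  · exact (Real.measurable_log.aestronglyMeasurable).restrict
  · rw [ae_restrict_iff' measurableSet_Ioc]
    refine Filter.Eventually.of_forall fun x hx => ?_
    obtain ⟨hx0, hx2⟩ := hx
    have hxr : (0:ℝ) < x ^ (-(1/2) : ℝ) := Real.rpow_pos_of_pos hx0 _
    rw [Real.norm_eq_abs, Real.norm_eq_abs]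
    have hrhs : |2 * x ^ (-(1/2) : ℝ) + π / 2| = 2 * x ^ (-(1/2) : ℝ) + π / 2 := by
      rw [abs_of_pos]; positivity
    rw [hrhs]
    rcases le_or_gt x 1 with hx1 | hx1
    · have hlog : Real.log x ≤ 0 := Real.log_nonpos (le_of_lt hx0) hx1
      rw [abs_of_nonpos hlog]
      have key : -Real.log x = 2 * Real.log (x ^ (-(1/2) : ℝ)) := by
        rw [Real.log_rpow hx0]; ring
      have hle : Real.log (x ^ (-(1/2) : ℝ)) ≤ x ^ (-(1/2) : ℝ) :=
        (Real.log_le_sub_one_of_pos hxr).trans (by linarith)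
      nlinarith [Real.pi_pos]
    · have hlog : 0 ≤ Real.log x := Real.log_nonneg (le_of_lt hx1)
      rw [abs_of_nonneg hlog]
      have : Real.log x ≤ x - 1 := Real.log_le_sub_one_of_pos hx0
      nlinarith

private lemma logsin_bound {x : ℝ} (hx : x ∈ Set.Ioc (0:ℝ) (π / 2)) :
    |Real.log (Real.sin x)| ≤ Real.log (π / 2) + |Real.log x| := by
  obtain ⟨hx0, hx2⟩ := hx
  have hsin_pos : 0 < Real.sin x := Real.sin_pos_of_pos_of_lt_pi hx0
    (lt_of_le_of_lt hx2 (by linarith [Real.pi_pos]))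
  have hsin_le : Real.sin x ≤ 1 := Real.sin_le_one x
  have hlow : 2 / π * x ≤ Real.sin x := Real.mul_le_sin (le_of_lt hx0) hx2
  have hlog_nonpos : Real.log (Real.sin x) ≤ 0 := Real.log_nonpos (le_of_lt hsin_pos) hsin_le
  rw [abs_of_nonpos hlog_nonpos]
  have hxpos : (0:ℝ) < 2 / π * x := by
    have := Real.pi_pos; positivity
  have h1 : Real.log (2 / π * x) ≤ Real.log (Real.sin x) :=
    Real.log_le_log hxpos hlow
  have h2 : Real.log (2 / π * x) = -Real.log (π / 2) + Real.log x := by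
    rw [Real.log_mul (by positivity) (ne_of_gt hx0)]
    have : (2:ℝ) / π = (π / 2)⁻¹ := by
      rw [inv_div]
    rw [this, Real.log_inv]
  linarith [neg_le_abs (Real.log x), abs_nonneg (Real.log x)]

private lemma u_identity (r x : ℝ) :
    1 - 2 * r * Real.cos (2 * x) + r ^ 2 = (1 - r) ^ 2 + 4 * r * Real.sin x ^ 2 := by
  have h1 : Real.cos (2 * x) = Real.cos x ^ 2 - Real.sin x ^ 2 := Real.cos_two_mul' x
  have h2 := Real.sin_sq_add_cos_sq x
  nlinarith [h1, h2]

private lemma u_logbound {r x : ℝ} (hr : r ∈ Set.Icc (1/2 : ℝ) 1) (hx : x ∈ Set.Ioc (0:ℝ) (π / 2)) :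
    |Real.log (1 - 2 * r * Real.cos (2 * x) + r ^ 2)| ≤
      Real.log 4 + Real.log 2 + 2 * (Real.log (π / 2) + |Real.log x|) := by
  obtain ⟨hr1, hr2⟩ := hr
  obtain ⟨hx0, hx2⟩ := hx
  have hsin_pos : 0 < Real.sin x := Real.sin_pos_of_pos_of_lt_pi hx0
    (lt_of_le_of_lt hx2 (by linarith [Real.pi_pos]))
  have hsin_le : Real.sin x ≤ 1 := Real.sin_le_one x
  set u := 1 - 2 * r * Real.cos (2 * x) + r ^ 2 with hu
  have hid : u = (1 - r) ^ 2 + 4 * r * Real.sin x ^ 2 := u_identity r x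
  have hlb : 2 * Real.sin x ^ 2 ≤ u := by nlinarith
  have hub : u ≤ 4 := by nlinarith
  have hupos : 0 < u := by nlinarith
  have hlog_up : Real.log u ≤ Real.log 4 := Real.log_le_log hupos hub
  have hlog_lo : Real.log (2 * Real.sin x ^ 2) ≤ Real.log u :=
    Real.log_le_log (by positivity) hlb
  have hsplit : Real.log (2 * Real.sin x ^ 2) = Real.log 2 + 2 * Real.log (Real.sin x) := by
    rw [Real.log_mul (by norm_num) (by positivity), Real.log_pow]
    push_cast; ring
  have hls := logsin_bound ⟨hx0, hx2⟩
  have hlog2 : (0:ℝ) ≤ Real.log 2 := Real.log_nonneg (by norm_num)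
  have hlog4 : (0:ℝ) ≤ Real.log 4 := Real.log_nonneg (by norm_num)
  have hlogpi : (0:ℝ) ≤ Real.log (π / 2) := Real.log_nonneg (by linarith [Real.pi_gt_three])
  rw [abs_le]
  constructor
  · have : -|Real.log (Real.sin x)| ≤ Real.log (Real.sin x) := neg_abs_le _
    nlinarith [abs_nonneg (Real.log x)]
  · nlinarith [abs_nonneg (Real.log x)]

/-! ### Interchange of sum and integral for fixed `r < 1` -/

private lemma swap_lemma (r : ℝ) (h0 : 0 ≤ r) (h1 : r < 1) :
    ∫ x in Set.Ioc (0:ℝ) (π / 2),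
        x * (-(1 / 2) * Real.log (1 - 2 * r * Real.cos (2 * x) + r ^ 2))
      = ∑' n : ℕ, r ^ (n + 1) * cc n := by
  have hpi : (0:ℝ) ≤ π / 2 := by positivity
  set F : ℕ → ℝ → ℝ := fun n x =>
    x * (r ^ (n + 1) * Real.cos (2 * ((n : ℝ) + 1) * x) / ((n : ℝ) + 1)) with hF
  have hF_cont : ∀ n, Continuous (F n) := by
    intro n
    exact continuous_id.mul ((continuous_const.mul (Real.continuous_cos.comp
      (continuous_const.mul continuous_id))).div_const _)
  have hF_int : ∀ n, Integrable (F n) (volume.restrict (Set.Ioc (0:ℝ) (π / 2))) := fun n =>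
    (hF_cont n).integrableOn_Ioc
  have hmeas_fin : volume (Set.Ioc (0:ℝ) (π / 2)) < ⊤ := measure_Ioc_lt_top
  have hbound : ∀ n, ∀ x ∈ Set.Ioc (0:ℝ) (π / 2), ‖F n x‖ ≤ π / 2 * r ^ (n + 1) := by
    intro n x hx
    obtain ⟨hx0, hx2⟩ := hx
    have h1n : (1:ℝ) ≤ (n : ℝ) + 1 := by
      have := Nat.cast_nonneg (α := ℝ) n; linarith
    rw [hF, Real.norm_eq_abs, abs_mul, abs_div, abs_mul]
    have hxa : |x| ≤ π / 2 := by rw [abs_of_pos hx0]; exact hx2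
    have hra : |r ^ (n + 1)| = r ^ (n + 1) := abs_of_nonneg (by positivity)
    have hca : |Real.cos (2 * ((n : ℝ) + 1) * x)| ≤ 1 := Real.abs_cos_le_one _
    have hna : |((n : ℝ) + 1)| = (n : ℝ) + 1 := abs_of_pos (by positivity)
    rw [hra, hna]
    have key : r ^ (n + 1) * |Real.cos (2 * ((n : ℝ) + 1) * x)| / ((n : ℝ) + 1)
        ≤ r ^ (n + 1) := by
      rw [div_le_iff₀ (by positivity)]
      have h2 : r ^ (n + 1) * |Real.cos (2 * ((n : ℝ) + 1) * x)| ≤ r ^ (n + 1) * 1 := by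
        exact mul_le_mul_of_nonneg_left hca (by positivity)
      nlinarith [pow_nonneg h0 (n + 1)]
    exact mul_le_mul hxa key (by positivity) (by positivity)
  have hF_sum : Summable fun n => ∫ x, ‖F n x‖ ∂(volume.restrict (Set.Ioc (0:ℝ) (π / 2))) := by
    have hle : ∀ n, ∫ x, ‖F n x‖ ∂(volume.restrict (Set.Ioc (0:ℝ) (π / 2)))
        ≤ (π / 2) ^ 2 * r ^ (n + 1) := by
      intro n
      have h1 := norm_setIntegral_le_of_norm_le_const (μ := volume) (s := Set.Ioc (0:ℝ) (π / 2))
        (f := fun x => ‖F n x‖) (C := π / 2 * r ^ (n + 1)) hmeas_fin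
        (fun x hx => by rw [norm_norm]; exact hbound n x hx)
      have h2 : volume.real (Set.Ioc (0:ℝ) (π / 2)) = π / 2 := by
        rw [measureReal_def, Real.volume_Ioc]
        simp [ENNReal.toReal_ofReal hpi]
      rw [h2] at h1
      calc ∫ x, ‖F n x‖ ∂(volume.restrict (Set.Ioc (0:ℝ) (π / 2)))
          ≤ ‖∫ x, ‖F n x‖ ∂(volume.restrict (Set.Ioc (0:ℝ) (π / 2)))‖ := le_abs_self _
        _ ≤ π / 2 * r ^ (n + 1) * (π / 2) := h1
        _ = (π / 2) ^ 2 * r ^ (n + 1) := by ring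
    refine Summable.of_nonneg_of_le (fun n => integral_nonneg fun x => norm_nonneg _) hle ?_
    have hg : Summable fun n : ℕ => r ^ n := summable_geometric_of_lt_one h0 h1
    exact ((hg.mul_left ((π / 2) ^ 2 * r)).congr fun n => by rw [pow_succ]; ring)
  have key := integral_tsum_of_summable_integral_norm hF_int hF_sum
  have hpt : ∀ x : ℝ, (∑' n, F n x)
      = x * (-(1 / 2) * Real.log (1 - 2 * r * Real.cos (2 * x) + r ^ 2)) := by
    intro x
    rw [hF]
    rw [tsum_mul_left, (logSum r x h0 h1).tsum_eq]
  have hterm : ∀ n : ℕ, (∫ x, F n x ∂(volume.restrict (Set.Ioc (0:ℝ) (π / 2))))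
      = r ^ (n + 1) * cc n := by
    intro n
    have h1 : (∫ x, F n x ∂(volume.restrict (Set.Ioc (0:ℝ) (π / 2))))
        = ∫ x in (0:ℝ)..(π / 2), F n x := (intervalIntegral.integral_of_le hpi).symm
    rw [h1, hF]
    have h2 : ∀ x : ℝ, x * (r ^ (n + 1) * Real.cos (2 * ((n : ℝ) + 1) * x) / ((n : ℝ) + 1))
        = (r ^ (n + 1) / ((n : ℝ) + 1)) * (x * Real.cos (2 * ((n : ℝ) + 1) * x)) := by
      intro x; ring
    simp only [h2]
    rw [intervalIntegral.integral_const_mul, xcos_integral n]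
    unfold cc
    rw [div_mul_div_comm, mul_div_assoc]
    have hden : ((n : ℝ) + 1) * (4 * ((n : ℝ) + 1) ^ 2) = 4 * ((n : ℝ) + 1) ^ 3 := by ring
    rw [hden]
  have hcongr : ∫ x in Set.Ioc (0:ℝ) (π / 2),
      x * (-(1 / 2) * Real.log (1 - 2 * r * Real.cos (2 * x) + r ^ 2))
      = ∫ x in Set.Ioc (0:ℝ) (π / 2), (∑' n, F n x) := by
    exact integral_congr_ae (Filter.Eventually.of_forall fun x => (hpt x).symm)
  rw [hcongr, ← key]
  exact tsum_congr hterm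

-- integrability of x * log (sin x)
private lemma xlogsin_integrable :
    IntegrableOn (fun x : ℝ => x * Real.log (Real.sin x)) (Set.Ioc (0:ℝ) (π / 2)) := by
  have hbig : IntegrableOn (fun x : ℝ => π / 2 * (Real.log (π / 2) + |Real.log x|))
      (Set.Ioc (0:ℝ) (π / 2)) := by
    exact ((integrableOn_const measure_Ioc_lt_top.ne).add logIntegrable.abs).const_mul _
  refine hbig.integrable.mono ?_ ?_
  · exact ((measurable_id.mul (Real.measurable_log.comp
      Real.measurable_sin)).aestronglyMeasurable).restrict
  · rw [ae_restrict_iff' measurableSet_Ioc]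
    refine Filter.Eventually.of_forall fun x hx => ?_
    obtain ⟨hx0, hx2⟩ := hx
    rw [Real.norm_eq_abs, Real.norm_eq_abs, abs_mul]
    have h1 : |x| ≤ π / 2 := by rw [abs_of_pos hx0]; exact hx2
    have h2 := logsin_bound ⟨hx0, hx2⟩
    have h3 : |π / 2 * (Real.log (π / 2) + |Real.log x|)|
        = π / 2 * (Real.log (π / 2) + |Real.log x|) := by
      rw [abs_of_nonneg]
      have hlogpi : (0:ℝ) ≤ Real.log (π / 2) := Real.log_nonneg (by linarith [Real.pi_gt_three])
      positivity
    rw [h3]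
    exact mul_le_mul h1 h2 (abs_nonneg _) (by positivity)

-- the limit of the LHS
private lemma tendsto_lhs :
    Tendsto (fun r : ℝ => ∫ x in Set.Ioc (0:ℝ) (π / 2),
        x * (-(1 / 2) * Real.log (1 - 2 * r * Real.cos (2 * x) + r ^ 2)))
      (nhdsWithin 1 (Set.Iio 1))
      (𝓝 (∫ x in Set.Ioc (0:ℝ) (π / 2), x * (-(1 / 2) * Real.log (2 - 2 * Real.cos (2 * x))))) := by
  have hlogpi : (0:ℝ) ≤ Real.log (π / 2) := Real.log_nonneg (by linarith [Real.pi_gt_three])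
  set bound : ℝ → ℝ := fun x => π / 2 * ((1 / 2) *
    (Real.log 4 + Real.log 2 + 2 * (Real.log (π / 2) + |Real.log x|))) with hbd
  have hmem : Set.Ioo (1/2 : ℝ) 1 ∈ nhdsWithin (1:ℝ) (Set.Iio 1) :=
    Ioo_mem_nhdsLT_of_mem (by constructor <;> norm_num)
  refine tendsto_integral_filter_of_dominated_convergence bound ?_ ?_ ?_ ?_
  · refine Filter.Eventually.of_forall fun r => ?_
    exact ((measurable_id.mul ((Real.measurable_log.comp
      ((measurable_const.sub ((Real.measurable_cos.comp
        (measurable_const.mul measurable_id)).const_mul (2*r))).add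
        measurable_const)).const_mul _)).aestronglyMeasurable).restrict
  · filter_upwards [hmem] with r hr
    rw [ae_restrict_iff' measurableSet_Ioc]
    refine Filter.Eventually.of_forall fun x hx => ?_
    obtain ⟨hx0, hx2⟩ := hx
    rw [Real.norm_eq_abs, abs_mul, abs_mul]
    have h1 : |x| ≤ π / 2 := by rw [abs_of_pos hx0]; exact hx2
    have h2 : |(-(1/2) : ℝ)| = 1/2 := by norm_num
    rw [h2]
    have h3 := u_logbound ⟨le_of_lt hr.1, le_of_lt hr.2⟩ ⟨hx0, hx2⟩
    rw [hbd]
    have h4 : (1:ℝ)/2 * |Real.log (1 - 2 * r * Real.cos (2 * x) + r ^ 2)|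
        ≤ (1/2) * (Real.log 4 + Real.log 2 + 2 * (Real.log (π / 2) + |Real.log x|)) := by
      linarith
    refine mul_le_mul h1 h4 (by positivity) (by positivity)
  · have hbe : bound = fun x => π / 2 * ((1 / 2) * (Real.log 4 + Real.log 2
        + 2 * Real.log (π / 2))) + (π / 2) * |Real.log x| := by
      funext x; rw [hbd]; ring
    rw [hbe]
    exact (integrableOn_const measure_Ioc_lt_top.ne).add
      (logIntegrable.abs.const_mul _)
  · rw [ae_restrict_iff' measurableSet_Ioc]
    refine Filter.Eventually.of_forall fun x hx => ?_
    obtain ⟨hx0, hx2⟩ := hx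
    have hsin_pos : 0 < Real.sin x := Real.sin_pos_of_pos_of_lt_pi hx0
      (lt_of_le_of_lt hx2 (by linarith [Real.pi_pos]))
    have harg : (0:ℝ) < 2 - 2 * Real.cos (2 * x) := by
      have := u_identity 1 x
      nlinarith [this]
    have hcontArg : Continuous fun r : ℝ => 1 - 2 * r * Real.cos (2 * x) + r ^ 2 := by
      continuity
    have hca : ContinuousAt (fun r : ℝ =>
        x * (-(1 / 2) * Real.log (1 - 2 * r * Real.cos (2 * x) + r ^ 2))) 1 := by
      refine continuousAt_const.mul (ContinuousAt.mul continuousAt_const ?_)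
      refine (Real.continuousAt_log ?_).comp hcontArg.continuousAt
      intro hzero
      rw [show (1:ℝ) - 2 * 1 * Real.cos (2 * x) + 1 ^ 2 = 2 - 2 * Real.cos (2 * x) by ring] at hzero
      linarith
    have := hca.tendsto.mono_left (nhdsWithin_le_nhds (s := Set.Iio (1:ℝ)))
    convert this using 2
    ring

private lemma tendsto_rhs :
    Tendsto (fun r : ℝ => ∑' n : ℕ, r ^ (n + 1) * cc n) (𝓝[<] (1:ℝ))
      (𝓝 (∑' n : ℕ, cc n)) := by
  refine tendsto_tsum_of_dominated_convergence (bound := fun n => |cc n|)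
    hasSumC.summable.abs (fun n => ?_) ?_
  · have hc : Tendsto (fun r : ℝ => r ^ (n + 1)) (𝓝 (1:ℝ)) (𝓝 ((1:ℝ) ^ (n + 1))) :=
      (continuous_pow (n + 1)).tendsto 1
    have := (hc.mono_left (nhdsWithin_le_nhds (s := Set.Iio (1:ℝ)))).mul_const (cc n)
    simpa using this
  · have hmem : Set.Ioo (0 : ℝ) 1 ∈ 𝓝[<] (1:ℝ) :=
      Ioo_mem_nhdsLT_of_mem (by constructor <;> norm_num)
    filter_upwards [hmem] with r hr n
    rw [norm_mul, Real.norm_eq_abs, Real.norm_eq_abs, abs_pow]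
    have h1 : |r| ^ (n + 1) ≤ 1 := pow_le_one₀ (abs_nonneg r) (abs_le.2 ⟨by linarith [hr.1], le_of_lt hr.2⟩)
    nlinarith [abs_nonneg (cc n), pow_nonneg (abs_nonneg r) (n+1)]

private lemma limit_integral_eq :
    (∫ x in Set.Ioc (0:ℝ) (π / 2), x * (-(1 / 2) * Real.log (2 - 2 * Real.cos (2 * x))))
      = -(Real.log 2) * (π ^ 2 / 8) - ∫ x in Set.Ioc (0:ℝ) (π / 2), x * Real.log (Real.sin x) := by
  have hpi : (0:ℝ) ≤ π / 2 := by positivity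
  have hpt : ∀ x ∈ Set.Ioc (0:ℝ) (π / 2),
      x * (-(1 / 2) * Real.log (2 - 2 * Real.cos (2 * x)))
        = -(Real.log 2) * x - x * Real.log (Real.sin x) := by
    intro x hx
    obtain ⟨hx0, hx2⟩ := hx
    have hsin_pos : 0 < Real.sin x := Real.sin_pos_of_pos_of_lt_pi hx0
      (lt_of_le_of_lt hx2 (by linarith [Real.pi_pos]))
    have h4 : 2 - 2 * Real.cos (2 * x) = 4 * Real.sin x ^ 2 := by
      have := u_identity 1 x
      nlinarith [this]
    rw [h4]
    have hlog : Real.log (4 * Real.sin x ^ 2)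
        = 2 * Real.log 2 + 2 * Real.log (Real.sin x) := by
      rw [Real.log_mul (by norm_num) (by positivity), Real.log_pow]
      have h42 : Real.log 4 = 2 * Real.log 2 := by
        rw [show (4:ℝ) = 2 ^ 2 by norm_num, Real.log_pow]
        push_cast; ring
      rw [h42]; push_cast; ring
    rw [hlog]; ring
  rw [setIntegral_congr_fun measurableSet_Ioc hpt]
  have hx_int : IntegrableOn (fun x : ℝ => -(Real.log 2) * x) (Set.Ioc (0:ℝ) (π / 2)) :=
    (continuous_const.mul continuous_id).integrableOn_Ioc
  rw [integral_sub hx_int xlogsin_integrable]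
  congr 1
  rw [integral_const_mul]
  have hid : (∫ x in Set.Ioc (0:ℝ) (π / 2), x) = π ^ 2 / 8 := by
    rw [← intervalIntegral.integral_of_le hpi]
    rw [integral_id]
    ring
  rw [hid]

theorem zeta3_log_sin_integral :
    (∑' n : ℕ, 1 / ((n : ℝ) + 1) ^ 3) =
      (4 / 7) * (π ^ 2 * Real.log 2 / 2 +
        4 * ∫ x in (0 : ℝ)..(π / 2), x * Real.log (Real.sin x)) := by
  have hpi : (0:ℝ) ≤ π / 2 := by positivity
  set S := ∑' n : ℕ, 1 / ((n : ℝ) + 1) ^ 3 with hS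
  set I := ∫ x in Set.Ioc (0:ℝ) (π / 2), x * Real.log (Real.sin x) with hI
  have hL := tendsto_lhs
  rw [limit_integral_eq] at hL
  have hmem : Set.Ioo (0 : ℝ) 1 ∈ 𝓝[<] (1:ℝ) :=
    Ioo_mem_nhdsLT_of_mem (by constructor <;> norm_num)
  have hEq : (fun r : ℝ => ∫ x in Set.Ioc (0:ℝ) (π / 2),
      x * (-(1 / 2) * Real.log (1 - 2 * r * Real.cos (2 * x) + r ^ 2)))
      =ᶠ[𝓝[<] (1:ℝ)] (fun r : ℝ => ∑' n : ℕ, r ^ (n + 1) * cc n) := by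
    filter_upwards [hmem] with r hr
    exact swap_lemma r (le_of_lt hr.1) hr.2
  have hL' : Tendsto (fun r : ℝ => ∑' n : ℕ, r ^ (n + 1) * cc n) (𝓝[<] (1:ℝ))
      (𝓝 (-(Real.log 2) * (π ^ 2 / 8) - I)) := hL.congr' hEq
  have hR := tendsto_rhs
  have huniq : -(Real.log 2) * (π ^ 2 / 8) - I = ∑' n : ℕ, cc n :=
    tendsto_nhds_unique hL' hR
  rw [hasSumC.tsum_eq] at huniq
  have hIinterval : (∫ x in (0 : ℝ)..(π / 2), x * Real.log (Real.sin x)) = I := by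
    rw [hI, intervalIntegral.integral_of_le hpi]
  rw [hIinterval]
  rw [← hS] at huniq
  linear_combination ((16:ℝ)/7) * huniq
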